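/- Let e1, e2 ∈ {0, 1, …, N−1} with e1 < e2 and suppose e1 + e2 ≡ 1 (mod N). For every odd shift τ = 2τ0 + 1 with 0 ≤ τ0 ≤ N−1, the periodic cross-correlation of S^{e1} and S^{e2} satisfies: R_{S^{e1},S^{e2}}(2τ0+1) = −2N if τ0 ≡ −e2 − N/2 (mod N); R_{S^{e1},S^{e2}}(2τ0+1) = −2N1 if τ0 ≡ −e2 (mod N); and R_{S^{e1},S^{e2}}(2τ0+1) = −2N2 otherwise. -/

import Mathlib

/-- The geometric sequence of the first type: `t¹ₙ = 1` iff the Legendre symbol of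
`Tr(ω^n)` is `-1`, and `0` otherwise (i.e. when the symbol is `0` or `1`). -/
noncomputable def ntuT1 (p : ℕ) [Fact p.Prime] {F : Type} [Field F]
    [Algebra (ZMod p) F] (ω : F) (n : ℕ) : ZMod 2 :=
  if legendreSym p ((Algebra.trace (ZMod p) F (ω ^ n)).val : ℤ) = -1 then 1 else 0

/-- The geometric sequence of the second type: `t²ₙ = 0` iff the Legendre symbol of
`Tr(ω^n)` is `1`, and `1` otherwise (i.e. when the symbol is `0` or `-1`). -/
noncomputable def ntuT2 (p : ℕ) [Fact p.Prime] {F : Type} [Field F]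
    [Algebra (ZMod p) F] (ω : F) (n : ℕ) : ZMod 2 :=
  if legendreSym p ((Algebra.trace (ZMod p) F (ω ^ n)).val : ℤ) = 1 then 0 else 1

/-- Periodic cross-correlation at shift `τ` of two `N`-periodic binary sequences:
`R_{s,s'}(τ) = Σ_{i=0}^{N-1} (-1)^{s_i + s'_{i+τ}}`, indices taken modulo `N`. -/
def pcorr (N : ℕ) (s s' : ℕ → ZMod 2) (τ : ℤ) : ℤ :=
  ∑ i ∈ Finset.range N, (-1 : ℤ) ^ ((s i + s' ((((i : ℤ) + τ) % (N : ℤ)).toNat)).val)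

/-- The interleaved sequence of `t` and the left shift by `e` of `u`:
`n = 2j ↦ t j`, `n = 2j+1 ↦ u (j + e)`. -/
def ntuInterleave (t u : ℕ → ZMod 2) (e : ℕ) (n : ℕ) : ZMod 2 :=
  if n % 2 = 0 then t (n / 2) else u (n / 2 + e)


open Finset Polynomial



lemma aux_sum_range_two_mul (n : ℕ) (f : ℕ → ℤ) :
    ∑ i ∈ range (2*n), f i = ∑ j ∈ range n, f (2*j) + ∑ j ∈ range n, f (2*j+1) := by
  induction n with
  | zero => simp
  | succ n ih =>
      have h2 : 2*(n+1) = (2*n) + 1 + 1 := by ring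
      rw [h2, sum_range_succ, sum_range_succ, sum_range_succ, sum_range_succ, ih]
      ring

lemma aux_periodic_shift_sum (N : ℕ) (hN : 0 < N) (V : ℕ → ℤ) (hV : ∀ a, V (a+N) = V a)
    (k : ℕ) : ∑ j ∈ range N, V (j+k) = ∑ j ∈ range N, V j := by
  induction k with
  | zero => simp
  | succ k ih =>
      rw [← ih]
      obtain ⟨M, rfl⟩ : ∃ M, N = M + 1 := ⟨N-1, by omega⟩
      have h1 : ∑ j ∈ range (M+1), V (j + (k+1)) = ∑ j ∈ range (M+1+1), V (j + k) - V k := by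
        rw [Finset.sum_range_succ' (fun j => V (j + k)) (M+1)]
        have : ∀ j, V (j + 1 + k) = V (j + (k+1)) := by intro j; ring_nf
        simp [this]
      rw [h1, sum_range_succ]
      have : V (M + 1 + k) = V k := by have := hV k; rw [← this]; ring_nf
      rw [this]; ring

lemma aux_block_sum {F : Type} [CommMonoid F] (W : F → ℤ) (ω γ : F) (N : ℕ)
    (hγ : ω^N = γ) (hinv : ∀ x, W (γ * x) = W x) (K : ℕ) :
    ∑ j ∈ range (K*N), W (ω^j) = K * ∑ j ∈ range N, W (ω^j) := by
  have hpow : ∀ (k : ℕ) (x : F), W (γ^k * x) = W x := by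
    intro k
    induction k with
    | zero => simp
    | succ k ih =>
        intro x
        have : γ ^ (k+1) * x = γ * (γ ^ k * x) := by rw [pow_succ, mul_comm (γ^k) γ, mul_assoc]
        rw [this, hinv, ih]
  induction K with
  | zero => simp
  | succ K ih =>
      have : (K+1)*N = K*N + N := by ring
      rw [this, Finset.sum_range_add, ih]
      have : ∀ i, W (ω ^ (K*N + i)) = W (ω ^ i) := by
        intro i
        rw [pow_add, mul_comm K N, pow_mul, hγ, hpow]
      simp only [this]
      push_cast; ring



lemma aux_fiber_card {F W : Type} [AddCommGroup F] [AddCommGroup W] [Fintype F] [DecidableEq W]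
    (φ : F →+ W) (w : W) (x0 : F) (hx0 : φ x0 = w) :
    ({x : F | φ x = w} : Finset F).card = ({x : F | φ x = 0} : Finset F).card := by
  apply Finset.card_bij (fun (y : F) _ => y - x0)
  · intro a ha
    simp only [Finset.mem_filter, Finset.mem_univ, true_and] at ha ⊢
    simp [map_sub, ha, hx0]
  · intro a _ b _ h
    simpa using h
  · intro b hb
    refine ⟨b + x0, ?_, by rw [add_sub_cancel_right]⟩
    simp only [Finset.mem_filter, Finset.mem_univ, true_and] at hb ⊢
    simp [map_add, hb, hx0]

lemma aux_fiber_sum {F W : Type} [AddCommGroup F] [AddCommGroup W] [Fintype F] [Fintype W]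
    [DecidableEq W] (φ : F →+ W) (hs : Function.Surjective φ) (g : W → ℤ) :
    ∃ K : ℕ, K * Fintype.card W = Fintype.card F ∧
      ∑ x : F, g (φ x) = K * ∑ w : W, g w := by
  classical
  set K := ({x : F | φ x = 0} : Finset F).card with hK
  have hcard : ∀ w : W, ({x : F | φ x = w} : Finset F).card = K := by
    intro w
    obtain ⟨x0, hx0⟩ := hs w
    exact aux_fiber_card φ w x0 hx0
  refine ⟨K, ?_, ?_⟩
  · have h1 : (univ : Finset F).card = ∑ w : W, ({x : F | φ x = w} : Finset F).card :=
      Finset.card_eq_sum_card_fiberwise (f := fun x => φ x) (fun x _ => mem_univ _)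
    rw [Finset.card_univ] at h1
    calc K * Fintype.card W = ∑ _w : W, K := by
          rw [Finset.sum_const, Finset.card_univ, smul_eq_mul, mul_comm]
    _ = ∑ w : W, ({x : F | φ x = w} : Finset F).card := by
        refine (Finset.sum_congr rfl fun w _ => ?_).symm
        rw [hcard w]
    _ = Fintype.card F := h1.symm
  · rw [← Finset.sum_fiberwise' (univ : Finset F) (fun x => φ x) g]
    have : ∀ w : W, ∑ _x ∈ ({x : F | φ x = w} : Finset F), g w = K * g w := by
      intro w
      rw [Finset.sum_const, hcard w]
      simp [mul_comm]
    calc ∑ w : W, ∑ x ∈ univ.filter (fun x => φ x = w), g w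
        = ∑ w : W, (K : ℤ) * g w := by
          apply Finset.sum_congr rfl; intro w _
          rw [← this w]
    _ = K * ∑ w : W, g w := by rw [Finset.mul_sum]



lemma aux_mem_fp_iff (p : ℕ) [Fact p.Prime] (F : Type) [Field F] [Fintype F]
    [Algebra (ZMod p) F] (x : F) :
    (∃ a : ZMod p, algebraMap (ZMod p) F a = x) ↔ x ^ p = x := by
  classical
  have hp1 : 1 < p := (Fact.out : p.Prime).one_lt
  set q : F[X] := X ^ p - X with hq
  have hqne : q ≠ 0 := FiniteField.X_pow_card_sub_X_ne_zero F hp1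
  have hqdeg : q.natDegree = p := FiniteField.X_pow_card_sub_X_natDegree_eq F hp1
  set I : Finset F := Finset.image (algebraMap (ZMod p) F) Finset.univ with hI
  set R : Finset F := q.roots.toFinset with hR
  have hinj : Function.Injective (algebraMap (ZMod p) F) := (algebraMap (ZMod p) F).injective
  have hIR : I ⊆ R := by
    intro y hy
    simp only [hI, Finset.mem_image] at hy
    obtain ⟨a, _, rfl⟩ := hy
    rw [hR, Multiset.mem_toFinset, Polynomial.mem_roots hqne]
    simp only [hq, IsRoot.def, eval_sub, eval_pow, eval_X]
    rw [← map_pow, ZMod.pow_card, sub_self]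
  have hIcard : I.card = p := by
    rw [hI, Finset.card_image_of_injective _ hinj, Finset.card_univ, ZMod.card]
  have hRcard : R.card ≤ p := by
    calc R.card ≤ Multiset.card q.roots := Multiset.toFinset_card_le _
    _ ≤ q.natDegree := Polynomial.card_roots' q
    _ = p := hqdeg
  have hIReq : I = R := Finset.eq_of_subset_of_card_le hIR (by rw [hIcard]; exact hRcard)
  constructor
  · rintro ⟨a, rfl⟩
    rw [← map_pow, ZMod.pow_card]
  · intro hx
    have : x ∈ R := by
      rw [hR, Multiset.mem_toFinset, Polynomial.mem_roots hqne]
      simp only [hq, IsRoot.def, eval_sub, eval_pow, eval_X]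
      rw [hx, sub_self]
    rw [← hIReq, hI, Finset.mem_image] at this
    obtain ⟨a, _, ha⟩ := this
    exact ⟨a, ha⟩



section
variable (p : ℕ) [Fact p.Prime] {F : Type} [Field F] [Algebra (ZMod p) F]

/-- `χ x = quadraticChar (Tr x)`. -/
noncomputable def auxChi (x : F) : ℤ := quadraticChar (ZMod p) (Algebra.trace (ZMod p) F x)

lemma auxChi_smul (u : ZMod p) (x : F) :
    auxChi p (algebraMap (ZMod p) F u * x) = quadraticChar (ZMod p) u * auxChi p x := by
  unfold auxChi
  have h1 : algebraMap (ZMod p) F u * x = u • x := (Algebra.smul_def u x).symm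
  rw [h1, map_smul, smul_eq_mul, map_mul]

lemma auxChi_zero_iff (x : F) : auxChi p x = 0 ↔ Algebra.trace (ZMod p) F x = 0 := by
  unfold auxChi; exact quadraticChar_eq_zero_iff

lemma auxChi_trichotomy (x : F) : auxChi p x = 0 ∨ auxChi p x = 1 ∨ auxChi p x = -1 := by
  unfold auxChi
  by_cases h : Algebra.trace (ZMod p) F x = 0
  · left; rw [h]; exact quadraticChar_zero
  · right; exact quadraticChar_dichotomy h

end

section
variable (p : ℕ) [Fact p.Prime] {F : Type} [Field F] [Fintype F] [Algebra (ZMod p) F]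

lemma aux_tr_surj : Function.Surjective (Algebra.trace (ZMod p) F) :=
  Algebra.trace_surjective (ZMod p) F

/-- The pair map as an `AddMonoidHom`. -/
noncomputable def auxPhi (β : F) : F →+ (ZMod p × ZMod p) :=
  AddMonoidHom.mk' (fun x => (Algebra.trace (ZMod p) F x, Algebra.trace (ZMod p) F (β * x)))
    (by intro x y; simp [mul_add, map_add, Prod.mk_add_mk])

lemma auxPhi_surj (β : F) (hβ : ¬ ∃ a : ZMod p, algebraMap (ZMod p) F a = β) :
    Function.Surjective (auxPhi p β) := by
  obtain ⟨x1, hx1⟩ := aux_tr_surj p (F := F) 1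
  have hx2 : ∃ x2 : F, Algebra.trace (ZMod p) F x2 = 0 ∧ Algebra.trace (ZMod p) F (β * x2) ≠ 0 := by
    by_contra h
    push_neg at h
    set t := Algebra.trace (ZMod p) F (β * x1) with ht
    have key : ∀ x : F, Algebra.trace (ZMod p) F (β * x) = Algebra.trace (ZMod p) F x * t := by
      intro x
      have h0 : Algebra.trace (ZMod p) F (x - Algebra.trace (ZMod p) F x • x1) = 0 := by
        rw [map_sub, map_smul, hx1, smul_eq_mul, mul_one, sub_self]
      have h2 := h _ h0
      rw [mul_sub, mul_smul_comm, map_sub, map_smul, smul_eq_mul, ← ht, sub_eq_zero] at h2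
      exact h2
    have hall : ∀ y : F, Algebra.traceForm (ZMod p) F (β - algebraMap (ZMod p) F t) y = 0 := by
      intro y
      rw [Algebra.traceForm_apply, sub_mul, map_sub, key]
      have : algebraMap (ZMod p) F t * y = t • y := (Algebra.smul_def t y).symm
      rw [this, map_smul, smul_eq_mul, mul_comm, sub_self]
    have h3 := (traceForm_nondegenerate (ZMod p) F).1 _ hall
    rw [sub_eq_zero] at h3
    exact hβ ⟨t, h3.symm⟩
  obtain ⟨x2, hx2a, hx2b⟩ := hx2
  set t := Algebra.trace (ZMod p) F (β * x1) with ht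
  set s := Algebra.trace (ZMod p) F (β * x2) with hs
  rintro ⟨u, v⟩
  refine ⟨u • x1 + ((v - u * t) * s⁻¹) • x2, ?_⟩
  show (_, _) = (u, v)
  have e1 : Algebra.trace (ZMod p) F (u • x1 + ((v - u * t) * s⁻¹) • x2) = u := by
    rw [map_add, map_smul, map_smul, hx1, hx2a, smul_eq_mul, smul_eq_mul,
      mul_one, mul_zero, add_zero]
  have e2 : Algebra.trace (ZMod p) F (β * (u • x1 + ((v - u * t) * s⁻¹) • x2)) = v := by
    rw [mul_add, mul_smul_comm, mul_smul_comm, map_add, map_smul, map_smul,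
      smul_eq_mul, smul_eq_mul, ← ht, ← hs]
    field_simp
    ring
  rw [e1, e2]
end



section
variable (p : ℕ) [Fact p.Prime]

lemma aux_char_ne_two (hp2 : p ≠ 2) : ringChar (ZMod p) ≠ 2 := by
  rw [ZMod.ringChar_zmod_n]; exact hp2

lemma aux_sum_sq (hp2 : p ≠ 2) :
    ∑ u : ZMod p, quadraticChar (ZMod p) u * quadraticChar (ZMod p) u = (p:ℤ) - 1 := by
  have h : ∀ u : ZMod p, quadraticChar (ZMod p) u * quadraticChar (ZMod p) u
      = 1 - (if u = 0 then (1:ℤ) else 0) := by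
    intro u
    by_cases hu : u = 0
    · simp [hu, quadraticChar_zero]
    · have := quadraticChar_sq_one (F := ZMod p) hu
      rw [pow_two] at this
      rw [if_neg hu, sub_zero]
      exact this
  simp only [h]
  rw [Finset.sum_sub_distrib]
  rw [Finset.sum_const, Finset.sum_ite_eq' Finset.univ (0 : ZMod p) (fun _ => (1:ℤ))]
  simp [ZMod.card]

lemma aux_sum_bu (hp2 : p ≠ 2) (b : ZMod p) :
    ∑ u : ZMod p, quadraticChar (ZMod p) u * (quadraticChar (ZMod p) b * quadraticChar (ZMod p) u)
      = quadraticChar (ZMod p) b * ((p:ℤ) - 1) := by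
  rw [← aux_sum_sq p hp2, Finset.mul_sum]
  apply Finset.sum_congr rfl
  intro u _
  ring

lemma aux_sum_ind0 : ∑ u : ZMod p, (if u = 0 then (1:ℤ) else 0) = 1 := by
  rw [Finset.sum_ite_eq' Finset.univ (0 : ZMod p) (fun _ => (1:ℤ))]
  simp

lemma aux_sum_prod_chi (hp2 : p ≠ 2) :
    ∑ w : ZMod p × ZMod p, quadraticChar (ZMod p) w.1 * quadraticChar (ZMod p) w.2 = 0 := by
  rw [Fintype.sum_prod_type]
  have : ∀ u : ZMod p, ∑ v : ZMod p, quadraticChar (ZMod p) u * quadraticChar (ZMod p) v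
      = quadraticChar (ZMod p) u * ∑ v : ZMod p, (quadraticChar (ZMod p) v : ℤ) := by
    intro u; rw [Finset.mul_sum]
  simp only [this]
  rw [← Finset.sum_mul, quadraticChar_sum_zero (aux_char_ne_two p hp2)]
  · simp
  
lemma aux_sum_prod_ind :
    ∑ w : ZMod p × ZMod p, (if w.1 = 0 ∧ w.2 = 0 then (1:ℤ) else 0) = 1 := by
  rw [Fintype.sum_prod_type]
  have : ∀ u : ZMod p, ∑ v : ZMod p, (if u = 0 ∧ v = 0 then (1:ℤ) else 0)
      = if u = 0 then 1 else 0 := by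
    intro u
    by_cases hu : u = 0
    · simp only [hu, true_and, if_true]
      exact aux_sum_ind0 p
    · simp [hu]
  simp only [this]
  exact aux_sum_ind0 p

end

section
variable (p m : ℕ) [Fact p.Prime] {F : Type} [Field F] [Fintype F] [Algebra (ZMod p) F]

lemma aux_K_det {K k : ℕ} (hp : 1 < p) (hk : k ≤ m) (h : K * p ^ k = p ^ m) : K = p ^ (m - k) := by
  have h2 : p ^ m = p ^ (m - k) * p ^ k := by rw [← pow_add]; congr 1; omega
  rw [h2] at h
  exact Nat.eq_of_mul_eq_mul_right (pow_pos (by omega : 0 < p) k) h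

lemma aux_count_C1 (hp2 : p ≠ 2) (hcard : Fintype.card F = p ^ m)
    (β : F) (hβ : ¬ ∃ a : ZMod p, algebraMap (ZMod p) F a = β) :
    ∑ x : F, auxChi p x * auxChi p (β * x) = 0 := by
  classical
  obtain ⟨K, hK1, hK2⟩ := aux_fiber_sum (auxPhi p β) (auxPhi_surj p β hβ)
    (fun w => quadraticChar (ZMod p) w.1 * quadraticChar (ZMod p) w.2)
  have : ∑ x : F, auxChi p x * auxChi p (β * x)
      = ∑ x : F, (fun w : ZMod p × ZMod p => quadraticChar (ZMod p) w.1 * quadraticChar (ZMod p) w.2) (auxPhi p β x) := by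
    apply Finset.sum_congr rfl; intro x _; rfl
  rw [this, hK2, aux_sum_prod_chi p hp2, mul_zero]

lemma aux_count_C2 (hp2 : p ≠ 2) (hm : 1 < m) (hcard : Fintype.card F = p ^ m)
    (β : F) (hβ : ¬ ∃ a : ZMod p, algebraMap (ZMod p) F a = β) :
    ∑ x : F, (if auxChi p x = 0 ∧ auxChi p (β * x) = 0 then (1:ℤ) else 0) = (p:ℤ) ^ (m - 2) := by
  classical
  obtain ⟨K, hK1, hK2⟩ := aux_fiber_sum (auxPhi p β) (auxPhi_surj p β hβ)
    (fun w => if w.1 = 0 ∧ w.2 = 0 then (1:ℤ) else 0)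
  have heq : ∑ x : F, (if auxChi p x = 0 ∧ auxChi p (β * x) = 0 then (1:ℤ) else 0)
      = ∑ x : F, (fun w : ZMod p × ZMod p => if w.1 = 0 ∧ w.2 = 0 then (1:ℤ) else 0) (auxPhi p β x) := by
    apply Finset.sum_congr rfl; intro x _
    simp only [auxChi_zero_iff]
    rfl
  rw [heq, hK2, aux_sum_prod_ind p, mul_one]
  have hcardW : Fintype.card (ZMod p × ZMod p) = p ^ 2 := by
    rw [Fintype.card_prod, ZMod.card]; ring
  rw [hcardW, hcard] at hK1
  have hKval : K = p ^ (m - 2) := aux_K_det p m (Fact.out : p.Prime).one_lt (by omega) hK1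
  rw [hKval]; push_cast; ring

lemma aux_count_D1 (hp2 : p ≠ 2) (hm : 1 < m) (hcard : Fintype.card F = p ^ m)
    (b : ZMod p) (hb : b ≠ 0) :
    ∑ x : F, auxChi p x * auxChi p ((algebraMap (ZMod p) F b) * x)
      = quadraticChar (ZMod p) b * ((p:ℤ) ^ (m - 1) * ((p:ℤ) - 1)) := by
  classical
  obtain ⟨K, hK1, hK2⟩ := aux_fiber_sum (Algebra.trace (ZMod p) F).toAddMonoidHom
    (aux_tr_surj p)
    (fun u => quadraticChar (ZMod p) u * (quadraticChar (ZMod p) b * quadraticChar (ZMod p) u))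
  have heq : ∑ x : F, auxChi p x * auxChi p ((algebraMap (ZMod p) F b) * x)
      = ∑ x : F, (fun u => quadraticChar (ZMod p) u * (quadraticChar (ZMod p) b * quadraticChar (ZMod p) u)) ((Algebra.trace (ZMod p) F).toAddMonoidHom x) := by
    apply Finset.sum_congr rfl; intro x _
    rw [auxChi_smul]
    rfl
  rw [heq, hK2, aux_sum_bu p hp2 b]
  rw [ZMod.card, hcard] at hK1
  have hKval : K = p ^ (m - 1) := aux_K_det p m (Fact.out : p.Prime).one_lt (by omega) (by rw [← hK1]; ring)
  rw [hKval]; push_cast; ring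

lemma aux_count_D2 (hm : 1 < m) (hcard : Fintype.card F = p ^ m)
    (b : ZMod p) (hb : b ≠ 0) :
    ∑ x : F, (if auxChi p x = 0 ∧ auxChi p ((algebraMap (ZMod p) F b) * x) = 0 then (1:ℤ) else 0)
      = (p:ℤ) ^ (m - 1) := by
  classical
  obtain ⟨K, hK1, hK2⟩ := aux_fiber_sum (Algebra.trace (ZMod p) F).toAddMonoidHom
    (aux_tr_surj p) (fun u => if u = 0 then (1:ℤ) else 0)
  have heq : ∑ x : F, (if auxChi p x = 0 ∧ auxChi p ((algebraMap (ZMod p) F b) * x) = 0 then (1:ℤ) else 0)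
      = ∑ x : F, (fun u => if u = 0 then (1:ℤ) else 0) ((Algebra.trace (ZMod p) F).toAddMonoidHom x) := by
    apply Finset.sum_congr rfl; intro x _
    simp only [auxChi_zero_iff]
    have hmul : Algebra.trace (ZMod p) F ((algebraMap (ZMod p) F b) * x)
        = b * Algebra.trace (ZMod p) F x := by
      rw [← Algebra.smul_def, map_smul, smul_eq_mul]
    by_cases hx : Algebra.trace (ZMod p) F x = 0
    · simp [hx, hmul]
    · have hx' : (Algebra.trace (ZMod p) F).toAddMonoidHom x = (0 : ZMod p) ↔ False := by
        simpa using hx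
      simp [hx, hx']
  rw [heq, hK2, aux_sum_ind0 p, mul_one]
  rw [ZMod.card, hcard] at hK1
  have hKval : K = p ^ (m - 1) := aux_K_det p m (Fact.out : p.Prime).one_lt (by omega) (by rw [← hK1]; ring)
  rw [hKval]; push_cast; ring

lemma aux_gen_sum [DecidableEq F] (ω : F) (hω : orderOf ω = Fintype.card F - 1)
    (hcard1 : 1 < Fintype.card F) (g : F → ℤ) :
    ∑ j ∈ range (Fintype.card F - 1), g (ω ^ j) = (∑ x : F, g x) - g 0 := by
  have hωpos : 0 < orderOf ω := by rw [hω]; exact Nat.sub_pos_of_lt hcard1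
  have hω0 : ω ≠ 0 := by
    intro h
    have h1 : (0:F) ^ orderOf ω = 1 := by rw [← h]; exact pow_orderOf_eq_one ω
    rw [zero_pow hωpos.ne'] at h1
    exact zero_ne_one h1
  have hinj : Set.InjOn (fun j => ω ^ j) (↑(range (Fintype.card F - 1)) : Set ℕ) := by
    intro a ha b hb hab
    apply pow_injOn_Iio_orderOf (x := ω) _ _ hab
    · simp only [Set.mem_Iio, hω]; simpa using ha
    · simp only [Set.mem_Iio, hω]; simpa using hb
  have hsum : ∑ j ∈ range (Fintype.card F - 1), g (ω ^ j)
      = ∑ x ∈ (range (Fintype.card F - 1)).image (fun j => ω ^ j), g x := by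
    rw [Finset.sum_image]
    intro a ha b hb hab
    exact hinj (by simpa using ha) (by simpa using hb) hab
  have hsub : (range (Fintype.card F - 1)).image (fun j => ω ^ j) ⊆ Finset.univ.erase 0 := by
    intro y hy
    simp only [Finset.mem_image] at hy
    obtain ⟨j, _, rfl⟩ := hy
    exact Finset.mem_erase.2 ⟨pow_ne_zero j hω0, Finset.mem_univ _⟩
  have hcards : (Finset.univ.erase (0:F)).card ≤ ((range (Fintype.card F - 1)).image (fun j => ω ^ j)).card := by
    rw [Finset.card_erase_of_mem (Finset.mem_univ _), Finset.card_univ,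
      Finset.card_image_of_injOn hinj, Finset.card_range]
  have heq2 := Finset.eq_of_subset_of_card_le hsub hcards
  rw [hsum, heq2, Finset.sum_erase_eq_sub (Finset.mem_univ (0:F))]

end

lemma aux_pointwise (a b : ℤ) (ha : a = 0 ∨ a = 1 ∨ a = -1) (hb : b = 0 ∨ b = 1 ∨ b = -1) :
    (-1:ℤ) ^ (((if a = -1 then (1 : ZMod 2) else 0) + (if b = 1 then (0 : ZMod 2) else 1)).val)
  + (-1:ℤ) ^ (((if a = 1 then (0 : ZMod 2) else 1) + (if b = -1 then (1 : ZMod 2) else 0)).val)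
  = 2 * (a * b) - 2 * (if a = 0 ∧ b = 0 then 1 else 0) := by
  rcases ha with rfl|rfl|rfl <;> rcases hb with rfl|rfl|rfl <;> decide

lemma aux_leg_eq (p : ℕ) [Fact p.Prime] (a : ZMod p) :
    legendreSym p ((a.val : ℤ)) = quadraticChar (ZMod p) a := by
  unfold legendreSym
  congr 1
  push_cast
  simp [ZMod.natCast_val, ZMod.cast_id]

section
variable (p : ℕ) [Fact p.Prime] {F : Type} [Field F] [Algebra (ZMod p) F]

lemma aux_T1_eq (ω : F) (n : ℕ) :
    ntuT1 p ω n = (if auxChi p (ω ^ n) = -1 then (1 : ZMod 2) else 0) := by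
  unfold ntuT1 auxChi
  rw [aux_leg_eq]

lemma aux_T2_eq (ω : F) (n : ℕ) :
    ntuT2 p ω n = (if auxChi p (ω ^ n) = 1 then (0 : ZMod 2) else 1) := by
  unfold ntuT2 auxChi
  rw [aux_leg_eq]

lemma aux_ord_ne_zero (ω : F) (h : 0 < orderOf ω) : ω ≠ 0 := by
  intro h0
  have h1 : (0:F) ^ orderOf ω = 1 := by rw [← h0]; exact pow_orderOf_eq_one ω
  rw [zero_pow h.ne'] at h1
  exact zero_ne_one h1

end

section
variable (p m : ℕ) [Fact p.Prime] {F : Type} [Field F] [Fintype F] [Algebra (ZMod p) F]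

lemma aux_pow_mem_iff (ω : F) (hω : orderOf ω = p ^ m - 1)
    (hpm : 4 ≤ p ^ m) (d : ℕ) (hd : (p - 1) * d = p ^ m - 1) (c : ℕ) :
    (∃ a : ZMod p, algebraMap (ZMod p) F a = ω ^ c) ↔ d ∣ c := by
  have hp1 : 1 < p := (Fact.out : p.Prime).one_lt
  have hω0 : ω ≠ 0 := aux_ord_ne_zero ω (by omega)
  have hx0 : ω ^ c ≠ 0 := pow_ne_zero c hω0
  rw [aux_mem_fp_iff p F (ω ^ c)]
  have h1 : (ω ^ c) ^ p = ω ^ c ↔ (ω ^ c) ^ (p - 1) = 1 := by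
    constructor
    · intro h
      have h2 : (ω ^ c) ^ (p - 1) * (ω ^ c) = 1 * (ω ^ c) := by
        rw [one_mul, ← pow_succ]
        have h3 : p - 1 + 1 = p := by omega
        rw [h3, h]
      exact mul_right_cancel₀ hx0 h2
    · intro h
      have hp' : p = p - 1 + 1 := by omega
      calc (ω ^ c) ^ p = (ω ^ c) ^ (p - 1) * (ω ^ c) := by
            conv_lhs => rw [hp', pow_succ]
        _ = ω ^ c := by rw [h, one_mul]
  rw [h1, ← pow_mul, ← orderOf_dvd_iff_pow_eq_one, hω, ← hd,
    mul_comm c (p-1), Nat.mul_dvd_mul_iff_left (show 0 < p - 1 by omega)]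

lemma aux_alpha_spec (ω : F) (hω : orderOf ω = p ^ m - 1) (hp2 : p ≠ 2)
    (hpm : 4 ≤ p ^ m) (d : ℕ) (hd : (p - 1) * d = p ^ m - 1) (hdpos : 0 < d) :
    ∃ a0 : ZMod p, algebraMap (ZMod p) F a0 = ω ^ d ∧ a0 ≠ 0 ∧
      quadraticChar (ZMod p) a0 = -1 := by
  have hp1 : 1 < p := (Fact.out : p.Prime).one_lt
  have hω0 : ω ≠ 0 := aux_ord_ne_zero ω (by omega)
  obtain ⟨a0, ha0⟩ := (aux_pow_mem_iff p m ω hω hpm d hd d).2 dvd_rfl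
  have ha0ne : a0 ≠ 0 := by
    intro h
    rw [h, map_zero] at ha0
    exact pow_ne_zero d hω0 ha0.symm
  refine ⟨a0, ha0, ha0ne, ?_⟩
  rw [quadraticChar_neg_one_iff_not_isSquare]
  rintro ⟨r, hr⟩
  have hrne : r ≠ 0 := by
    intro h; rw [h, mul_zero] at hr; exact ha0ne hr
  have hodd2 : p % 2 = 1 := ((Fact.out : p.Prime).eq_two_or_odd).resolve_left hp2
  set q := (p-1)/2 with hqdef
  have hq : p - 1 = 2*q := by omega
  have hqpos : 0 < q := by omega
  have h1 : a0 ^ q = 1 := by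
    rw [hr, ← pow_two, ← pow_mul, ← hq]
    exact ZMod.pow_card_sub_one_eq_one hrne
  have h2 : ω ^ (d*q) = 1 := by
    rw [pow_mul, ← ha0, ← map_pow, h1, map_one]
  have h3 : p^m - 1 ∣ d * q := by rw [← hω]; exact orderOf_dvd_of_pow_eq_one h2
  have h4 : p^m - 1 ≤ d*q := Nat.le_of_dvd (Nat.mul_pos hdpos hqpos) h3
  have h5 : 2*(d*q) = p^m - 1 := by rw [← hd, hq]; ring
  have hpos : 0 < d*q := Nat.mul_pos hdpos hqpos
  linarith

lemma aux_chi_shift (ω : F) (d : ℕ) (a0 : ZMod p)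
    (ha0 : algebraMap (ZMod p) F a0 = ω ^ d) (ha0ne : a0 ≠ 0) (j k : ℕ) :
    auxChi p (ω ^ (j + 2*d*k)) = auxChi p (ω ^ j) := by
  have h1 : ω ^ (j + 2*d*k) = algebraMap (ZMod p) F (a0 ^ (2*k)) * ω ^ j := by
    rw [map_pow, ha0, ← pow_mul, ← pow_add]
    congr 1
    ring
  rw [h1, auxChi_smul, map_pow]
  have h2 : quadraticChar (ZMod p) a0 ^ (2*k) = 1 := by
    rw [pow_mul, quadraticChar_sq_one ha0ne, one_pow]
  rw [h2, one_mul]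

lemma aux_chi_mod (ω : F) (d : ℕ) (hdpos : 0 < d) (a0 : ZMod p)
    (ha0 : algebraMap (ZMod p) F a0 = ω ^ d) (ha0ne : a0 ≠ 0) (n : ℕ) :
    auxChi p (ω ^ n) = auxChi p (ω ^ (n % (2*d))) := by
  conv_lhs => rw [show n = n % (2*d) + 2*d*(n/(2*d)) by rw [Nat.mod_add_div]]
  exact aux_chi_shift p ω d a0 ha0 ha0ne _ _

lemma aux_T1_mod (ω : F) (d : ℕ) (hdpos : 0 < d) (a0 : ZMod p)
    (ha0 : algebraMap (ZMod p) F a0 = ω ^ d) (ha0ne : a0 ≠ 0) (a b : ℕ)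
    (hab : a % (2*d) = b % (2*d)) : ntuT1 p ω a = ntuT1 p ω b := by
  rw [aux_T1_eq, aux_T1_eq, aux_chi_mod p ω d hdpos a0 ha0 ha0ne a,
    aux_chi_mod p ω d hdpos a0 ha0 ha0ne b, hab]

lemma aux_T2_mod (ω : F) (d : ℕ) (hdpos : 0 < d) (a0 : ZMod p)
    (ha0 : algebraMap (ZMod p) F a0 = ω ^ d) (ha0ne : a0 ≠ 0) (a b : ℕ)
    (hab : a % (2*d) = b % (2*d)) : ntuT2 p ω a = ntuT2 p ω b := by
  rw [aux_T2_eq, aux_T2_eq, aux_chi_mod p ω d hdpos a0 ha0 ha0ne a,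
    aux_chi_mod p ω d hdpos a0 ha0 ha0ne b, hab]

end

lemma aux_div_cases {N x : ℕ} (hN : 0 < N) (h : N ∣ x) (hub : x < 3*N) :
    x = 0 ∨ x = N ∨ x = 2*N := by
  obtain ⟨j, rfl⟩ := h
  have hj : j < 3 := by
    by_contra h3
    push_neg at h3
    have h4 : N*3 ≤ N*j := Nat.mul_le_mul_left N h3
    linarith
  interval_cases j <;> omega

lemma aux_mod_odd (N a : ℕ) (hN : 0 < N) : (2*a+1) % (2*N) = 2*(a % N)+1 := by
  have hlt : a % N < N := Nat.mod_lt _ hN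
  conv_lhs => rw [← Nat.mod_add_div a N]
  rw [show 2*(a % N + N*(a/N))+1 = (2*(a % N)+1) + (2*N)*(a/N) by ring,
    Nat.add_mul_mod_self_left, Nat.mod_eq_of_lt (by omega)]

lemma aux_mod_even (N a : ℕ) (hN : 0 < N) : (2*a) % (2*N) = 2*(a % N) := by
  have hlt : a % N < N := Nat.mod_lt _ hN
  conv_lhs => rw [← Nat.mod_add_div a N]
  rw [show 2*(a % N + N*(a/N)) = (2*(a % N)) + (2*N)*(a/N) by ring,
    Nat.add_mul_mod_self_left, Nat.mod_eq_of_lt (by omega)]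

theorem stmt15 (p m : ℕ) [Fact p.Prime] (hp2 : p ≠ 2) (hm : 1 < m)
    (F : Type) [Field F] [Fintype F] [Algebra (ZMod p) F]
    (hcard : Fintype.card F = p ^ m) (ω : F) (hω : orderOf ω = p ^ m - 1)
    (N : ℕ) (hN : N = 2 * (p ^ m - 1) / (p - 1)) (N1 N2 : ℤ)
    (hN1 : N1 = -2 * (p : ℤ) ^ (m - 1) + 2 * ((p : ℤ) ^ (m - 1) - 1) / ((p : ℤ) - 1))
    (hN2 : N2 = 2 * ((p : ℤ) ^ (m - 2) - 1) / ((p : ℤ) - 1))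
    (e1 e2 : ℕ) (he1 : e1 < N) (he2 : e2 < N) (hlt : e1 < e2)
    (hcond : (e1 : ℤ) + (e2 : ℤ) ≡ 1 [ZMOD (N : ℤ)])
    (τ0 : ℤ) (hτ0 : 0 ≤ τ0) (hτ1 : τ0 ≤ (N : ℤ) - 1) :
    pcorr (2 * N) (ntuInterleave (ntuT1 p ω) (ntuT2 p ω) e1) (ntuInterleave (ntuT1 p ω) (ntuT2 p ω) e2) (2 * τ0 + 1) =
      if τ0 ≡ -(e2 : ℤ) - ((N / 2 : ℕ) : ℤ) [ZMOD (N : ℤ)] then -2 * (N : ℤ)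
      else if τ0 ≡ -(e2 : ℤ) [ZMOD (N : ℤ)] then -2 * N1
      else -2 * N2 := by
  classical
  have hp : p.Prime := Fact.out
  have hp1 : 1 < p := hp.one_lt
  have hp3 : 3 ≤ p := by
    have := hp.two_le
    omega
  have hpm9 : 9 ≤ p ^ m := by
    calc 9 = 3 ^ 2 := by norm_num
    _ ≤ p ^ 2 := Nat.pow_le_pow_left hp3 2
    _ ≤ p ^ m := Nat.pow_le_pow_right (by omega) (by omega)
  have hdvd : (p - 1) ∣ (p ^ m - 1) := by
    simpa using Nat.sub_dvd_pow_sub_pow p 1 m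
  set d := (p ^ m - 1) / (p - 1) with hd_def
  have hd : (p - 1) * d = p ^ m - 1 := Nat.mul_div_cancel' hdvd
  have hdpos : 0 < d := by
    rcases Nat.eq_zero_or_pos d with h|h
    · rw [h, Nat.mul_zero] at hd; omega
    · exact h
  have hN2d : N = 2 * d := by
    rw [hN, hd_def, Nat.mul_div_assoc 2 hdvd]
  have hdN : d < N := by omega
  have hNpos : 0 < N := by omega
  have hNdiv2 : N / 2 = d := by omega
  -- α = ω^d
  obtain ⟨a0, ha0, ha0ne, ha0chi⟩ :=
    aux_alpha_spec p m (F := F) ω hω hp2 (by omega) d hd hdpos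
  -- τ0 as a natural number
  set s0 := τ0.toNat with hs0def
  have hs0' : (s0 : ℤ) = τ0 := Int.toNat_of_nonneg hτ0
  have hs0N : s0 < N := by omega
  set c := s0 + e2 with hc
  have hcub : c < 2 * N := by omega
  -- e1 + e2 = 1 or N + 1
  have hee : e1 + e2 = 1 ∨ e1 + e2 = N + 1 := by
    obtain ⟨z, hz⟩ := Int.ModEq.dvd hcond
    have hNZ0 : (0:ℤ) < (N:ℤ) := by exact_mod_cast hNpos
    have hb1 : (1:ℤ) ≤ (e1:ℤ) + e2 := by omega
    have hb2 : (e1:ℤ) + e2 ≤ 2*(N:ℤ) - 3 := by omega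
    have hz0 : z = 0 ∨ z = -1 := by
      rcases le_or_gt z (-2) with h|h
      · exfalso
        have h2 : (N:ℤ)*z ≤ (N:ℤ)*(-2) := mul_le_mul_of_nonneg_left h (le_of_lt hNZ0)
        linarith
      · rcases le_or_gt 1 z with h'|h'
        · exfalso
          have h2 : (N:ℤ)*1 ≤ (N:ℤ)*z := mul_le_mul_of_nonneg_left h' (le_of_lt hNZ0)
          linarith
        · omega
    rcases hz0 with rfl|rfl
    · rw [mul_zero] at hz; omega
    · rw [mul_neg_one] at hz; omega
  -- periodicity of the base sequences
  have hT1m : ∀ a b : ℕ, a % N = b % N → ntuT1 p ω a = ntuT1 p ω b := by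
    intro a b hab
    rw [hN2d] at hab
    exact aux_T1_mod p ω d hdpos a0 ha0 ha0ne a b hab
  have hT2m : ∀ a b : ℕ, a % N = b % N → ntuT2 p ω a = ntuT2 p ω b := by
    intro a b hab
    rw [hN2d] at hab
    exact aux_T2_mod p ω d hdpos a0 ha0 ha0ne a b hab
  -- the interleaved correlation as a single sum over one period
  set β := ω ^ c with hβdef
  set Wf : F → ℤ := fun x => 2 * (auxChi p x * auxChi p (x * β)) -
      2 * (if auxChi p x = 0 ∧ auxChi p (x * β) = 0 then (1:ℤ) else 0) with hWf
  set P := ∑ j ∈ Finset.range N, Wf (ω ^ j) with hP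
  have step1 : pcorr (2 * N) (ntuInterleave (ntuT1 p ω) (ntuT2 p ω) e1)
      (ntuInterleave (ntuT1 p ω) (ntuT2 p ω) e2) (2 * τ0 + 1) = P := by
    unfold pcorr
    have hidx : ∀ i : ℕ, ((((i : ℤ) + (2*τ0+1)) % (((2*N : ℕ)):ℤ)).toNat) = (i + (2*s0+1)) % (2*N) := by
      intro i
      have h1 : (i:ℤ) + (2*τ0+1) = (((i + (2*s0+1)) : ℕ) : ℤ) := by push_cast; omega
      rw [h1, ← Int.natCast_mod, Int.toNat_natCast]
    simp only [hidx]
    rw [aux_sum_range_two_mul]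
    have heven : ∀ j ∈ Finset.range N,
        (-1:ℤ)^((ntuInterleave (ntuT1 p ω) (ntuT2 p ω) e1 (2*j) +
          ntuInterleave (ntuT1 p ω) (ntuT2 p ω) e2 ((2*j + (2*s0+1)) % (2*N))).val)
        = (-1:ℤ)^((ntuT1 p ω j + ntuT2 p ω (j + c)).val) := by
      intro j _
      have e1even : ntuInterleave (ntuT1 p ω) (ntuT2 p ω) e1 (2*j) = ntuT1 p ω j := by
        unfold ntuInterleave
        rw [if_pos (Nat.mul_mod_right 2 j)]
        congr 1
        omega
      have hmod : (2*j + (2*s0+1)) % (2*N) = 2*((j+s0) % N) + 1 := by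
        rw [show 2*j + (2*s0+1) = 2*(j+s0)+1 by ring]
        exact aux_mod_odd N (j+s0) hNpos
      have e2odd : ntuInterleave (ntuT1 p ω) (ntuT2 p ω) e2 (2*((j+s0)%N)+1)
          = ntuT2 p ω ((j+s0)%N + e2) := by
        unfold ntuInterleave
        rw [if_neg (by omega)]
        congr 1
        omega
      have hper : ntuT2 p ω ((j+s0)%N + e2) = ntuT2 p ω (j + c) := by
        apply hT2m
        rw [Nat.mod_add_mod]
        congr 1
        omega
      rw [e1even, hmod, e2odd, hper]
    have hodd : ∀ j ∈ Finset.range N,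
        (-1:ℤ)^((ntuInterleave (ntuT1 p ω) (ntuT2 p ω) e1 (2*j+1) +
          ntuInterleave (ntuT1 p ω) (ntuT2 p ω) e2 ((2*j+1 + (2*s0+1)) % (2*N))).val)
        = (-1:ℤ)^((ntuT2 p ω (j+e1) + ntuT1 p ω ((j+e1) + c)).val) := by
      intro j _
      have e1odd : ntuInterleave (ntuT1 p ω) (ntuT2 p ω) e1 (2*j+1) = ntuT2 p ω (j + e1) := by
        unfold ntuInterleave
        rw [if_neg (by omega)]
        congr 1
        omega
      have hmod : (2*j+1 + (2*s0+1)) % (2*N) = 2*((j+s0+1) % N) := by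
        rw [show 2*j+1 + (2*s0+1) = 2*(j+s0+1) by ring]
        exact aux_mod_even N (j+s0+1) hNpos
      have e2even : ntuInterleave (ntuT1 p ω) (ntuT2 p ω) e2 (2*((j+s0+1)%N))
          = ntuT1 p ω ((j+s0+1)%N) := by
        unfold ntuInterleave
        rw [if_pos (Nat.mul_mod_right 2 _)]
        have : 2*((j+s0+1)%N)/2 = (j+s0+1)%N := by omega
        rw [this]
      have hper : ntuT1 p ω ((j+s0+1)%N) = ntuT1 p ω ((j+e1) + c) := by
        apply hT1m
        rw [Nat.mod_mod_of_dvd _ dvd_rfl]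
        rcases hee with h|h
        · congr 1
          omega
        · rw [show (j+e1) + c = (j+s0+1) + N by omega, Nat.add_mod_right]
      rw [e1odd, hmod, e2even, hper]
    rw [Finset.sum_congr rfl heven, Finset.sum_congr rfl hodd]
    set Vf : ℕ → ℤ := fun a => (-1:ℤ)^((ntuT2 p ω a + ntuT1 p ω (a + c)).val) with hVf
    have hVsum : ∑ j ∈ Finset.range N, (-1:ℤ)^((ntuT2 p ω (j+e1) + ntuT1 p ω ((j+e1) + c)).val)
        = ∑ j ∈ Finset.range N, Vf (j + e1) := rfl
    have hVper : ∀ a, Vf (a + N) = Vf a := by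
      intro a
      simp only [hVf]
      have hA : ntuT2 p ω (a+N) = ntuT2 p ω a := hT2m _ _ (Nat.add_mod_right a N)
      have hB : ntuT1 p ω (a+N+c) = ntuT1 p ω (a+c) := by
        apply hT1m
        rw [show a+N+c = (a+c)+N by ring, Nat.add_mod_right]
      rw [hA, hB]
    rw [hVsum, aux_periodic_shift_sum N hNpos Vf hVper e1, hP, ← Finset.sum_add_distrib]
    apply Finset.sum_congr rfl
    intro j _
    simp only [hVf, hWf]
    rw [aux_T1_eq, aux_T2_eq, aux_T1_eq, aux_T2_eq]
    have hbj : ω ^ (j+c) = ω^j * β := by rw [hβdef, pow_add]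
    rw [hbj]
    exact aux_pointwise (auxChi p (ω^j)) (auxChi p (ω^j * β))
      (auxChi_trichotomy p (ω^j)) (auxChi_trichotomy p (ω^j * β))
  -- fold the full period
  set q := (p-1)/2 with hqdef
  have hodd2 : p % 2 = 1 := hp.eq_two_or_odd.resolve_left hp2
  have hq : p - 1 = 2*q := by omega
  have hqpos : 0 < q := by omega
  have hKN : q * N = p ^ m - 1 := by
    calc q * N = q * (2*d) := by rw [hN2d]
    _ = (2*q) * d := by ring
    _ = (p-1) * d := by rw [hq]
    _ = p ^ m - 1 := hd
  have hsq : ω ^ N = algebraMap (ZMod p) F (a0 ^ 2) := by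
    rw [map_pow, ha0, ← pow_mul, hN2d]
    congr 1
    ring
  have hWinv : ∀ x, Wf (ω ^ N * x) = Wf x := by
    have hχ : ∀ y : F, auxChi p (ω ^ N * y) = auxChi p y := by
      intro y
      rw [hsq, auxChi_smul, map_pow, quadraticChar_sq_one ha0ne, one_mul]
    intro x
    simp only [hWf]
    rw [show (ω^N * x) * β = ω^N * (x*β) by ring, hχ x, hχ (x*β)]
  have hfold : ∑ j ∈ Finset.range (p^m-1), Wf (ω ^ j) = (q:ℤ) * P := by
    rw [← hKN, aux_block_sum Wf ω (ω^N) N rfl hWinv q, hP]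
  have hgen : ∑ j ∈ Finset.range (p^m-1), Wf (ω ^ j) = (∑ x : F, Wf x) - Wf 0 := by
    have h1 := aux_gen_sum (F := F) ω (by rw [hcard]; exact hω.symm ▸ hω) (by rw [hcard]; omega) Wf
    rw [hcard] at h1
    exact h1
  have hW0 : Wf 0 = -2 := by
    simp only [hWf]
    have h0 : auxChi p (0:F) = 0 := by
      unfold auxChi
      rw [map_zero, quadraticChar_zero]
    rw [zero_mul, h0]
    norm_num
  have hmain : ((p:ℤ) - 1) * P = 2 * ((∑ x : F, Wf x) + 2) := by
    have h2q : ((p:ℤ) - 1) = 2 * (q:ℤ) := by omega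
    calc ((p:ℤ)-1) * P = 2 * ((q:ℤ) * P) := by rw [h2q]; ring
    _ = 2 * ((∑ x : F, Wf x) - Wf 0) := by rw [← hfold, hgen]
    _ = 2 * ((∑ x : F, Wf x) + 2) := by rw [hW0]; ring
  -- splitting the sum of Wf
  have hsplit : (∑ x : F, Wf x) = 2 * (∑ x : F, auxChi p x * auxChi p (β * x)) -
      2 * (∑ x : F, if auxChi p x = 0 ∧ auxChi p (β * x) = 0 then (1:ℤ) else 0) := by
    simp only [hWf]
    rw [Finset.sum_sub_distrib, Finset.mul_sum, Finset.mul_sum]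
    congr 1
    · apply Finset.sum_congr rfl; intro x _; rw [mul_comm x β]
    · apply Finset.sum_congr rfl; intro x _; rw [mul_comm x β]
  -- cast facts
  have hdZ : ((p:ℤ) - 1) * (d:ℤ) = (p:ℤ)^m - 1 := by
    have h := hd
    zify [show 1 ≤ p by omega, show 1 ≤ p ^ m by omega] at h
    exact h
  have hNZ : (N:ℤ) = 2 * (d:ℤ) := by exact_mod_cast hN2d
  have hpm1 : (p:ℤ)^(m-1) * (p:ℤ) = (p:ℤ)^m := by
    rw [← pow_succ]
    congr 1
    omega
  have hBne : ((p:ℤ) - 1) ≠ 0 := by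
    have : (3:ℤ) ≤ (p:ℤ) := by exact_mod_cast hp3
    omega
  -- condition translations
  have hiff1 : (τ0 ≡ -(e2:ℤ) - ((N/2 : ℕ):ℤ) [ZMOD (N:ℤ)]) ↔ N ∣ (c + d) := by
    rw [Int.modEq_iff_dvd, hNdiv2,
      show -(e2:ℤ) - (d:ℤ) - τ0 = -(((c + d : ℕ)):ℤ) by push_cast; omega,
      dvd_neg, Int.natCast_dvd_natCast]
  have hiff2 : (τ0 ≡ -(e2:ℤ) [ZMOD (N:ℤ)]) ↔ N ∣ c := by
    rw [Int.modEq_iff_dvd,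
      show -(e2:ℤ) - τ0 = -(((c : ℕ)):ℤ) by push_cast; omega,
      dvd_neg, Int.natCast_dvd_natCast]
  rw [step1]
  by_cases h1 : τ0 ≡ -(e2:ℤ) - ((N/2 : ℕ):ℤ) [ZMOD (N:ℤ)]
  · rw [if_pos h1]
    obtain ⟨k, hck⟩ : ∃ k, c = d * (2*k+1) := by
      have hdc := hiff1.mp h1
      rcases aux_div_cases hNpos hdc (by omega) with h|h|h
      · omega
      · exact ⟨0, by omega⟩
      · exact ⟨1, by omega⟩
    have hβb : algebraMap (ZMod p) F (a0 ^ (2*k+1)) = β := by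
      rw [map_pow, ha0, ← pow_mul, hβdef]
      congr 1
      omega
    have hbne : a0 ^ (2*k+1) ≠ 0 := pow_ne_zero _ ha0ne
    have hχb : quadraticChar (ZMod p) (a0 ^ (2*k+1)) = -1 := by
      rw [map_pow, ha0chi]
      exact Odd.neg_one_pow ⟨k, by ring⟩
    have hS1 : ∑ x : F, auxChi p x * auxChi p (β * x)
        = -((p:ℤ)^(m-1) * ((p:ℤ)-1)) := by
      rw [← hβb, aux_count_D1 p m hp2 hm hcard _ hbne, hχb]
      ring
    have hS2 : ∑ x : F, (if auxChi p x = 0 ∧ auxChi p (β * x) = 0 then (1:ℤ) else 0)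
        = (p:ℤ)^(m-1) := by
      rw [← hβb]
      exact aux_count_D2 p m hm hcard _ hbne
    apply mul_left_cancel₀ hBne
    rw [hmain, hsplit, hS1, hS2]
    linear_combination (-4:ℤ) * hpm1 + (2*((p:ℤ)-1)) * hNZ + (4:ℤ) * hdZ
  · by_cases h2 : τ0 ≡ -(e2:ℤ) [ZMOD (N:ℤ)]
    · rw [if_neg h1, if_pos h2]
      obtain ⟨k, hck⟩ : ∃ k, c = d * (2*k) := by
        have hdc := hiff2.mp h2
        rcases aux_div_cases hNpos hdc (by omega) with h|h|h
        · exact ⟨0, by omega⟩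
        · exact ⟨1, by omega⟩
        · omega
      have hβb : algebraMap (ZMod p) F (a0 ^ (2*k)) = β := by
        rw [map_pow, ha0, ← pow_mul, hβdef]
        congr 1
        omega
      have hbne : a0 ^ (2*k) ≠ 0 := pow_ne_zero _ ha0ne
      have hχb : quadraticChar (ZMod p) (a0 ^ (2*k)) = 1 := by
        rw [map_pow, ha0chi, pow_mul]
        norm_num
      have hS1 : ∑ x : F, auxChi p x * auxChi p (β * x)
          = (p:ℤ)^(m-1) * ((p:ℤ)-1) := by
        rw [← hβb, aux_count_D1 p m hp2 hm hcard _ hbne, hχb, one_mul]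
      have hS2 : ∑ x : F, (if auxChi p x = 0 ∧ auxChi p (β * x) = 0 then (1:ℤ) else 0)
          = (p:ℤ)^(m-1) := by
        rw [← hβb]
        exact aux_count_D2 p m hm hcard _ hbne
      have ht' : ((p:ℤ)-1) * (∑ i ∈ Finset.range (m-1), (p:ℤ)^i) = (p:ℤ)^(m-1) - 1 := by
        have := geom_sum_mul ((p:ℤ)) (m-1)
        linarith [this]
      have hN1val : N1 = -2*(p:ℤ)^(m-1) + 2*(∑ i ∈ Finset.range (m-1), (p:ℤ)^i) := by
        rw [hN1, show 2 * ((p:ℤ)^(m-1) - 1) = ((p:ℤ)-1) * (2*(∑ i ∈ Finset.range (m-1), (p:ℤ)^i)) by linear_combination (-2:ℤ)*ht',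
          Int.mul_ediv_cancel_left _ hBne]
      apply mul_left_cancel₀ hBne
      rw [hmain, hsplit, hS1, hS2, hN1val]
      linear_combination (4:ℤ) * ht'
    · rw [if_neg h1, if_neg h2]
      have hnd : ¬ d ∣ c := by
        rintro ⟨k, hck⟩
        have hk4 : k < 4 := by
          by_contra h4
          push_neg at h4
          have : d*4 ≤ d*k := Nat.mul_le_mul_left d h4
          omega
        interval_cases k
        · exact h2 (hiff2.mpr (by omega))
        · exact h1 (hiff1.mpr ⟨1, by omega⟩)
        · exact h2 (hiff2.mpr ⟨1, by omega⟩)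
        · exact h1 (hiff1.mpr ⟨2, by omega⟩)
      have hβnm : ¬ ∃ a : ZMod p, algebraMap (ZMod p) F a = β := by
        rw [hβdef]
        rw [aux_pow_mem_iff p m (F := F) ω hω (by omega) d hd c]
        exact hnd
      have hS1 : ∑ x : F, auxChi p x * auxChi p (β * x) = 0 :=
        aux_count_C1 p m hp2 hcard β hβnm
      have hS2 : ∑ x : F, (if auxChi p x = 0 ∧ auxChi p (β * x) = 0 then (1:ℤ) else 0)
          = (p:ℤ)^(m-2) :=
        aux_count_C2 p m hp2 hm hcard β hβnm
      have ht'' : ((p:ℤ)-1) * (∑ i ∈ Finset.range (m-2), (p:ℤ)^i) = (p:ℤ)^(m-2) - 1 := by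
        have := geom_sum_mul ((p:ℤ)) (m-2)
        linarith [this]
      have hN2val : N2 = 2*(∑ i ∈ Finset.range (m-2), (p:ℤ)^i) := by
        rw [hN2, show 2 * ((p:ℤ)^(m-2) - 1) = ((p:ℤ)-1) * (2*(∑ i ∈ Finset.range (m-2), (p:ℤ)^i)) by linear_combination (-2:ℤ)*ht'',
          Int.mul_ediv_cancel_left _ hBne]
      apply mul_left_cancel₀ hBne
      rw [hmain, hsplit, hS1, hS2, hN2val]
      linear_combination (4:ℤ) * ht''
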